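/- Let N = 2^J and x ∈ ℝ^N with short support of length m ≤ M satisfying the non-cancellation condition, L := ⌈log₂ M⌉ + 1, and let j' be the unique index (if it exists) with S^{(j')} ⊂ {2^{j'}−M,...,2^{j'}−1}. Then for every j ∈ {L,...,J−1} \ {j'}, the support length of x^{(j+1)} equals that of x^{(j)}: m^{(j)} = m^{(j+1)}. -/
import Mathlib


open Matrix

/-- One step of reflected periodization: add the first half and the reflected second half. -/
noncomputable def halfSum (n : ℕ) (x : Fin (2 * n) → ℝ) : Fin n → ℝ :=
  fun k => x ⟨(k : ℕ), by have := k.isLt; omega⟩ +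
           x ⟨2 * n - 1 - (k : ℕ), by have := k.isLt; omega⟩

/-- Iterated reflected periodization, peeling off `s` halving steps. -/
noncomputable def perAux (j : ℕ) : (s : ℕ) → (Fin (2 ^ (j + s)) → ℝ) → Fin (2 ^ j) → ℝ
  | 0, x => x
  | s + 1, x => perAux j s (halfSum (2 ^ (j + s))
      (fun k => x (Fin.cast (by
        have h1 : j + (s + 1) = (j + s) + 1 := by omega
        rw [h1, pow_succ]; ring) k)))

/-- The reflected periodization `x^{(j)}` of `x ∈ ℝ^{2^J}`. -/
noncomputable def reflPer (J j : ℕ) (h : j ≤ J) (x : Fin (2 ^ J) → ℝ) : Fin (2 ^ j) → ℝ :=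
  perAux j (J - j) (fun k => x (Fin.cast (by rw [Nat.add_sub_cancel' h]) k))

/-- `y` has short (one-block) support of length `m` with first support index `μ`. -/
structure ShortSupp {n : ℕ} (y : Fin n → ℝ) (m μ : ℕ) : Prop where
  pos : 1 ≤ m
  bdd : μ + m ≤ n
  first : ∀ k : Fin n, (k : ℕ) = μ → y k ≠ 0
  last : ∀ k : Fin n, (k : ℕ) = μ + m - 1 → y k ≠ 0
  outside : ∀ k : Fin n, ((k : ℕ) < μ ∨ μ + m ≤ (k : ℕ)) → y k = 0

/-! ### Auxiliary machinery -/

/-- One folding step on total functions `ℕ → ℝ`. -/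
noncomputable def foldG (n : ℕ) (f : ℕ → ℝ) : ℕ → ℝ :=
  fun k => f k + f (2 ^ (n + 1) - 1 - k)

/-- Iterated folding on total functions. -/
noncomputable def foldH (j : ℕ) : ℕ → (ℕ → ℝ) → (ℕ → ℝ)
  | 0, f => f
  | s + 1, f => foldH j s (foldG (j + s) f)

lemma perAux_eq_foldH (j : ℕ) : ∀ (s : ℕ) (y : Fin (2 ^ (j + s)) → ℝ) (f : ℕ → ℝ),
    (∀ (i : ℕ) (hi : i < 2 ^ (j + s)), f i = y ⟨i, hi⟩) →
    ∀ k : Fin (2 ^ j), perAux j s y k = foldH j s f k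
  | 0, y, f, hf, k => by
      have := hf k k.isLt
      simpa [perAux, foldH] using (this).symm
  | s + 1, y, f, hf, k => by
      show perAux j s (halfSum (2 ^ (j + s)) _) k = foldH j s (foldG (j + s) f) k
      refine perAux_eq_foldH j s _ (foldG (j + s) f) ?_ k
      intro i hi
      have h2 : 2 ^ (j + s + 1) = 2 * 2 ^ (j + s) := by rw [pow_succ]; ring
      have hi1 : i < 2 ^ (j + s + 1) := by omega
      have hi2 : 2 * 2 ^ (j + s) - 1 - i < 2 ^ (j + s + 1) := by omega
      simp only [halfSum, foldG]
      rw [show 2 ^ (j + s + 1) - 1 - i = 2 * 2 ^ (j + s) - 1 - i from by omega]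
      rw [hf i hi1, hf (2 * 2 ^ (j + s) - 1 - i) hi2]
      rfl

lemma foldH_succ (j : ℕ) : ∀ (s : ℕ) (f : ℕ → ℝ),
    foldH j (s + 1) f = foldG j (foldH (j + 1) s f)
  | 0, f => by
      show foldG (j + 0) f = foldG j (foldH (j + 1) 0 f)
      rfl
  | s + 1, f => by
      show foldH j (s + 1) (foldG (j + (s + 1)) f) = foldG j (foldH (j + 1) (s + 1) f)
      rw [foldH_succ j s (foldG (j + (s + 1)) f)]
      show foldG j (foldH (j + 1) s (foldG (j + (s + 1)) f))
        = foldG j (foldH (j + 1) s (foldG ((j + 1) + s) f))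
      have : j + (s + 1) = (j + 1) + s := by omega
      rw [this]

/-- The canonical extension of `x` to `ℕ → ℝ` by zero. -/
noncomputable def extZ (J : ℕ) (x : Fin (2 ^ J) → ℝ) : ℕ → ℝ :=
  fun i => if h : i < 2 ^ J then x ⟨i, h⟩ else 0

lemma reflPer_eq_foldH (J j : ℕ) (h : j ≤ J) (x : Fin (2 ^ J) → ℝ) (k : Fin (2 ^ j)) :
    reflPer J j h x k = foldH j (J - j) (extZ J x) k := by
  refine perAux_eq_foldH j (J - j) _ (extZ J x) ?_ k
  intro i hi
  have hJ : j + (J - j) = J := Nat.add_sub_cancel' h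
  have hi' : i < 2 ^ J := by rw [← hJ]; exact hi
  simp only [extZ, dif_pos hi']
  congr 1

/-- The key one-step relation between consecutive reflected periodizations. -/
lemma reflPer_step (J j : ℕ) (hJ : j + 1 ≤ J) (x : Fin (2 ^ J) → ℝ) (k : Fin (2 ^ j))
    (hk1 : (k : ℕ) < 2 ^ (j + 1)) (hk2 : 2 ^ (j + 1) - 1 - (k : ℕ) < 2 ^ (j + 1)) :
    reflPer J j (le_trans (Nat.le_succ j) hJ) x k
      = reflPer J (j + 1) hJ x ⟨(k : ℕ), hk1⟩
        + reflPer J (j + 1) hJ x ⟨2 ^ (j + 1) - 1 - (k : ℕ), hk2⟩ := by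
  rw [reflPer_eq_foldH, reflPer_eq_foldH J (j+1) hJ x ⟨(k : ℕ), hk1⟩,
    reflPer_eq_foldH J (j+1) hJ x ⟨2 ^ (j + 1) - 1 - (k : ℕ), hk2⟩]
  have h1 : J - j = (J - (j + 1)) + 1 := by omega
  rw [h1, foldH_succ]
  rfl

lemma supp_halfSum (n w a : ℕ) (y : Fin (2 * n) → ℝ)
    (hy : ∀ k : Fin (2 * n), y k ≠ 0 → a ≤ (k : ℕ) ∧ (k : ℕ) < a + w) :
    ∃ a', ∀ k : Fin n, halfSum n y k ≠ 0 → a' ≤ (k : ℕ) ∧ (k : ℕ) < a' + w := by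
  have key : ∀ k : Fin n, halfSum n y k ≠ 0 →
      (a ≤ (k : ℕ) ∧ (k : ℕ) < a + w) ∨
      (a ≤ 2 * n - 1 - (k : ℕ) ∧ 2 * n - 1 - (k : ℕ) < a + w) := by
    intro k hk
    by_contra hc
    push_neg at hc
    obtain ⟨hc1, hc2⟩ := hc
    apply hk
    have e1 : y ⟨(k : ℕ), by have := k.isLt; omega⟩ = 0 := by
      by_contra h
      have := hy _ h
      simp only at this
      exact absurd this.2 (by intro h2; exact absurd (hc1 this.1) (by omega))
    have e2 : y ⟨2 * n - 1 - (k : ℕ), by have := k.isLt; omega⟩ = 0 := by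
      by_contra h
      have := hy _ h
      simp only at this
      exact absurd this.2 (by intro h2; exact absurd (hc2 this.1) (by omega))
    simp [halfSum, e1, e2]
  by_cases h1 : a + w ≤ n
  · refine ⟨a, fun k hk => ?_⟩
    rcases key k hk with h | h
    · exact h
    · have := k.isLt; omega
  · by_cases h2 : n ≤ a
    · refine ⟨2 * n - a - w, fun k hk => ?_⟩
      rcases key k hk with h | h
      · have := k.isLt; omega
      · have := k.isLt; omega
    · refine ⟨n - w, fun k hk => ?_⟩
      rcases key k hk with h | h
      · have := k.isLt; omega
      · have := k.isLt; omega

lemma supp_perAux (j : ℕ) : ∀ (s : ℕ) (w a : ℕ) (y : Fin (2 ^ (j + s)) → ℝ),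
    (∀ k : Fin (2 ^ (j + s)), y k ≠ 0 → a ≤ (k : ℕ) ∧ (k : ℕ) < a + w) →
    ∃ a', ∀ k : Fin (2 ^ j), perAux j s y k ≠ 0 → a' ≤ (k : ℕ) ∧ (k : ℕ) < a' + w
  | 0, w, a, y, hy => ⟨a, fun k hk => hy k hk⟩
  | s + 1, w, a, y, hy => by
      have h2 : 2 ^ (j + (s + 1)) = 2 * 2 ^ (j + s) := by
        rw [show j + (s + 1) = (j + s) + 1 from rfl, pow_succ]; ring
      have hy' : ∀ k : Fin (2 * 2 ^ (j + s)),
          (fun k => y (Fin.cast h2.symm k)) k ≠ 0 → a ≤ (k : ℕ) ∧ (k : ℕ) < a + w := by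
        intro k hk
        simpa using hy _ hk
      obtain ⟨a', ha'⟩ := supp_halfSum (2 ^ (j + s)) w a _ hy'
      exact supp_perAux j s w a' _ ha'

lemma supp_reflPer (J j m μ : ℕ) (h : j ≤ J) (x : Fin (2 ^ J) → ℝ)
    (hx : ∀ k : Fin (2 ^ J), x k ≠ 0 → μ ≤ (k : ℕ) ∧ (k : ℕ) < μ + m) :
    ∃ a, ∀ k : Fin (2 ^ j), reflPer J j h x k ≠ 0 → a ≤ (k : ℕ) ∧ (k : ℕ) < a + m := by
  refine supp_perAux j (J - j) m μ _ ?_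
  intro k hk
  simpa using hx _ hk

/-- Non-cancellation condition: if `m` is even, the first and last support entries
do not sum to zero. -/
def NonCancel {n : ℕ} (y : Fin n → ℝ) (m μ : ℕ) : Prop :=
  Even m → ∀ a b : Fin n, (a : ℕ) = μ → (b : ℕ) = μ + m - 1 → y a + y b ≠ 0

theorem support_length_invariant (J m M μ : ℕ) (x : Fin (2 ^ J) → ℝ)
    (hmM : m ≤ M) (hs : ShortSupp x m μ) (hnc : NonCancel x m μ)
    (j : ℕ) (hL : Nat.clog 2 M + 1 ≤ j) (hJ : j + 1 ≤ J)
    (hnotlast : ∃ k : Fin (2 ^ j), (k : ℕ) < 2 ^ j - M ∧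
        reflPer J j (le_trans (Nat.le_succ j) hJ) x k ≠ 0)
    (m₁ μ₁ m₂ μ₂ : ℕ)
    (h₁ : ShortSupp (reflPer J j (le_trans (Nat.le_succ j) hJ) x) m₁ μ₁)
    (h₂ : ShortSupp (reflPer J (j + 1) hJ x) m₂ μ₂) :
    m₁ = m₂ := by
  classical
  -- abbreviations
  set hj : j ≤ J := le_trans (Nat.le_succ j) hJ with hjdef
  set z := reflPer J j hj x with hz
  set y := reflPer J (j + 1) hJ x with hy
  have hpow : 2 ^ (j + 1) = 2 * 2 ^ j := by rw [pow_succ]; ring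
  -- the step relation
  have step : ∀ k : Fin (2 ^ j), ∀ (hk1 : (k : ℕ) < 2 ^ (j + 1))
      (hk2 : 2 ^ (j + 1) - 1 - (k : ℕ) < 2 ^ (j + 1)),
      z k = y ⟨(k : ℕ), hk1⟩ + y ⟨2 ^ (j + 1) - 1 - (k : ℕ), hk2⟩ := by
    intro k hk1 hk2
    exact reflPer_step J j hJ x k hk1 hk2
  -- support bound: m₂ ≤ m ≤ M
  have hm2 : m₂ ≤ m := by
    obtain ⟨a, ha⟩ := supp_reflPer J (j + 1) m μ hJ x (by
      intro k hk
      by_contra hc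
      push_neg at hc
      exact hk (hs.outside k (by omega)))
    have hμ2 : μ₂ < 2 ^ (j + 1) := by have := h₂.bdd; have := h₂.pos; omega
    have hμ2' : μ₂ + m₂ - 1 < 2 ^ (j + 1) := by have := h₂.bdd; have := h₂.pos; omega
    have f1 := ha ⟨μ₂, hμ2⟩ (h₂.first _ rfl)
    have f2 := ha ⟨μ₂ + m₂ - 1, hμ2'⟩ (h₂.last _ rfl)
    simp only at f1 f2
    have := h₂.pos
    omega
  obtain ⟨k0, hk0M, hk0⟩ := hnotlast
  have hk0lt : (k0 : ℕ) < 2 ^ j := k0.isLt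
  have hb2 := h₂.bdd
  have hp2 := h₂.pos
  have hb1 := h₁.bdd
  have hp1 := h₁.pos
  -- rule out the straddling case
  have hcase : μ₂ + m₂ ≤ 2 ^ j ∨ 2 ^ j ≤ μ₂ := by
    by_contra hc
    push_neg at hc
    obtain ⟨hc1, hc2⟩ := hc
    apply hk0
    have hA : (k0 : ℕ) < 2 ^ (j + 1) := by omega
    have hB : 2 ^ (j + 1) - 1 - (k0 : ℕ) < 2 ^ (j + 1) := by omega
    rw [step k0 hA hB]
    have e1 : y ⟨(k0 : ℕ), hA⟩ = 0 := h₂.outside _ (by (try simp only [Fin.val_mk]); omega)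
    have e2 : y ⟨2 ^ (j + 1) - 1 - (k0 : ℕ), hB⟩ = 0 := h₂.outside _ (by (try simp only [Fin.val_mk]); omega)
    rw [e1, e2, add_zero]
  rcases hcase with hca | hcb
  · -- support of y in first half: z agrees with y there
    have agree : ∀ k : Fin (2 ^ j), ∀ hk1 : (k : ℕ) < 2 ^ (j + 1),
        z k = y ⟨(k : ℕ), hk1⟩ := by
      intro k hk1
      have hB : 2 ^ (j + 1) - 1 - (k : ℕ) < 2 ^ (j + 1) := by have := k.isLt; omega
      rw [step k hk1 hB]
      have e2 : y ⟨2 ^ (j + 1) - 1 - (k : ℕ), hB⟩ = 0 :=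
        h₂.outside _ (by (try simp only [Fin.val_mk]); have := k.isLt; omega)
      rw [e2, add_zero]
    -- four inequalities
    have q1 : μ₁ ≤ μ₂ ∧ μ₂ < μ₁ + m₁ := by
      have hμ2j : μ₂ < 2 ^ j := by omega
      have hz2 : z ⟨μ₂, hμ2j⟩ ≠ 0 := by
        rw [agree ⟨μ₂, hμ2j⟩ (by (try simp only [Fin.val_mk]); omega)]
        exact h₂.first _ rfl
      by_contra hc
      push_neg at hc
      exact hz2 (h₁.outside _ (by (try simp only [Fin.val_mk]); omega))
    have q2 : μ₁ ≤ μ₂ + m₂ - 1 ∧ μ₂ + m₂ - 1 < μ₁ + m₁ := by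
      have hlt : μ₂ + m₂ - 1 < 2 ^ j := by omega
      have hz2 : z ⟨μ₂ + m₂ - 1, hlt⟩ ≠ 0 := by
        rw [agree ⟨μ₂ + m₂ - 1, hlt⟩ (by (try simp only [Fin.val_mk]); omega)]
        exact h₂.last _ rfl
      by_contra hc
      push_neg at hc
      exact hz2 (h₁.outside _ (by (try simp only [Fin.val_mk]); omega))
    have q3 : μ₂ ≤ μ₁ ∧ μ₁ < μ₂ + m₂ := by
      have hμ1j : μ₁ < 2 ^ j := by omega
      have hy1 : y ⟨μ₁, by omega⟩ ≠ 0 := by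
        rw [← agree ⟨μ₁, hμ1j⟩ (by (try simp only [Fin.val_mk]); omega)]
        exact h₁.first _ rfl
      by_contra hc
      push_neg at hc
      exact hy1 (h₂.outside _ (by (try simp only [Fin.val_mk]); omega))
    have q4 : μ₂ ≤ μ₁ + m₁ - 1 ∧ μ₁ + m₁ - 1 < μ₂ + m₂ := by
      have hlt : μ₁ + m₁ - 1 < 2 ^ j := by omega
      have hy1 : y ⟨μ₁ + m₁ - 1, by omega⟩ ≠ 0 := by
        rw [← agree ⟨μ₁ + m₁ - 1, hlt⟩ (by (try simp only [Fin.val_mk]); omega)]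
        exact h₁.last _ rfl
      by_contra hc
      push_neg at hc
      exact hy1 (h₂.outside _ (by (try simp only [Fin.val_mk]); omega))
    omega
  · -- support of y in second half: z is the reflection of y
    have agree : ∀ k : Fin (2 ^ j), ∀ hk2 : 2 ^ (j + 1) - 1 - (k : ℕ) < 2 ^ (j + 1),
        z k = y ⟨2 ^ (j + 1) - 1 - (k : ℕ), hk2⟩ := by
      intro k hk2
      have hA : (k : ℕ) < 2 ^ (j + 1) := by have := k.isLt; omega
      rw [step k hA hk2]
      have e1 : y ⟨(k : ℕ), hA⟩ = 0 :=
        h₂.outside _ (by (try simp only [Fin.val_mk]); have := k.isLt; omega)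
      rw [e1, zero_add]
    have q1 : μ₁ ≤ 2 ^ (j + 1) - 1 - μ₂ ∧ 2 ^ (j + 1) - 1 - μ₂ < μ₁ + m₁ := by
      have hlt : 2 ^ (j + 1) - 1 - μ₂ < 2 ^ j := by omega
      have hz2 : z ⟨2 ^ (j + 1) - 1 - μ₂, hlt⟩ ≠ 0 := by
        rw [agree ⟨2 ^ (j + 1) - 1 - μ₂, hlt⟩ (by (try simp only [Fin.val_mk]); omega)]
        exact h₂.first _ (by simp only [Fin.val_mk]; omega)
      by_contra hc
      push_neg at hc
      exact hz2 (h₁.outside _ (by (try simp only [Fin.val_mk]); omega))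
    have q2 : μ₁ ≤ 2 ^ (j + 1) - 1 - (μ₂ + m₂ - 1) ∧
        2 ^ (j + 1) - 1 - (μ₂ + m₂ - 1) < μ₁ + m₁ := by
      have hlt : 2 ^ (j + 1) - 1 - (μ₂ + m₂ - 1) < 2 ^ j := by omega
      have hz2 : z ⟨2 ^ (j + 1) - 1 - (μ₂ + m₂ - 1), hlt⟩ ≠ 0 := by
        rw [agree ⟨2 ^ (j + 1) - 1 - (μ₂ + m₂ - 1), hlt⟩ (by (try simp only [Fin.val_mk]); omega)]
        exact h₂.last _ (by simp only [Fin.val_mk]; omega)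
      by_contra hc
      push_neg at hc
      exact hz2 (h₁.outside _ (by (try simp only [Fin.val_mk]); omega))
    have q3 : μ₂ ≤ 2 ^ (j + 1) - 1 - μ₁ ∧ 2 ^ (j + 1) - 1 - μ₁ < μ₂ + m₂ := by
      have hμ1j : μ₁ < 2 ^ j := by omega
      have hy1 : y ⟨2 ^ (j + 1) - 1 - μ₁, by omega⟩ ≠ 0 := by
        rw [← agree ⟨μ₁, hμ1j⟩ (by (try simp only [Fin.val_mk]); omega)]
        exact h₁.first _ rfl
      by_contra hc
      push_neg at hc
      exact hy1 (h₂.outside _ (by (try simp only [Fin.val_mk]); omega))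
    have q4 : μ₂ ≤ 2 ^ (j + 1) - 1 - (μ₁ + m₁ - 1) ∧
        2 ^ (j + 1) - 1 - (μ₁ + m₁ - 1) < μ₂ + m₂ := by
      have hlt : μ₁ + m₁ - 1 < 2 ^ j := by omega
      have hy1 : y ⟨2 ^ (j + 1) - 1 - (μ₁ + m₁ - 1), by omega⟩ ≠ 0 := by
        rw [← agree ⟨μ₁ + m₁ - 1, hlt⟩ (by (try simp only [Fin.val_mk]); omega)]
        exact h₁.last _ rfl
      by_contra hc
      push_neg at hc
      exact hy1 (h₂.outside _ (by (try simp only [Fin.val_mk]); omega))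
    omega
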